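/- In the top-down algorithm, the returned set R is a feasible hop-constrained cycle cover: starting from R = V(G) and G₀ = ∅, after processing each vertex v (inserting v's edges into G₀, removing v from R and keeping its edges iff no simple cycle of length 3 to k through v exists in G₀, otherwise keeping v in R and deleting v's edges from G₀), the final R intersects every simple cycle of G of length between 3 and k, and R is minimal. -/
import Mathlib


variable {V : Type*}

open scoped Classical

/-- A closed walk of length `h` in a directed graph with edge relation `E`:
`w 0, w 1, …, w h` with consecutive edges and `w 0 = w h`. -/
def IsClosedWalk (E : V → V → Prop) (h : ℕ) (w : ℕ → V) : Prop :=
  (∀ i < h, E (w i) (w (i + 1))) ∧ w 0 = w h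

/-- A simple cycle of length `h`: a closed walk whose first `h` vertices are pairwise distinct. -/
def IsSimpleCycle (E : V → V → Prop) (h : ℕ) (w : ℕ → V) : Prop :=
  IsClosedWalk E h w ∧ ∀ a < h, ∀ b < h, w a = w b → a = b

/-- A hop-constrained cycle cover: a vertex set meeting every simple cycle of length 3..k. -/
def HopCycleCover (E : V → V → Prop) (k : ℕ) (C : Set V) : Prop :=
  ∀ (h : ℕ) (w : ℕ → V), 3 ≤ h → h ≤ k → IsSimpleCycle E h w → ∃ i ≤ h, w i ∈ C

/-- There is a simple cycle of length 3..k through `v` in the graph with the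
vertices of `T` deleted. -/
def HasHopCycleThrough (E : V → V → Prop) (k : ℕ) (T : Set V) (v : V) : Prop :=
  ∃ (h : ℕ) (w : ℕ → V), 3 ≤ h ∧ h ≤ k ∧ IsSimpleCycle E h w ∧ w 0 = v ∧ ∀ i ≤ h, w i ∉ T


/-- One step of the top-down process at vertex `v`: keep `v` in the current cover
set `R` iff there is a simple cycle of length 3..k through `v` in the current graph
G₀ + v (i.e. the graph with all vertices of `R` except `v` deleted); otherwise
remove `v` from `R`. -/
noncomputable def topDownStep (E : V → V → Prop) (k : ℕ) (R : Set V) (v : V) : Set V :=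
  if HasHopCycleThrough E k (R \ {v}) v then R else R \ {v}


lemma rotate_simple_cycle {E : V → V → Prop} {h : ℕ} {w : ℕ → V} (hh : 3 ≤ h)
    (hw : IsSimpleCycle E h w) (j : ℕ) (hj : j < h) :
    IsSimpleCycle E h (fun i => w ((j + i) % h)) := by
  obtain ⟨⟨hedge, hclose⟩, hinj⟩ := hw
  refine ⟨⟨?_, ?_⟩, ?_⟩
  · intro i hi
    simp only
    set a := (j + i) % h with ha
    have hah : a < h := Nat.mod_lt _ (by omega)
    have h2 : (j + (i + 1)) % h = (a + 1) % h := by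
      rw [ha, ← Nat.add_assoc, Nat.add_mod (j + i) 1 h,
        Nat.mod_eq_of_lt (show 1 < h by omega)]
    rw [h2]
    rcases Nat.lt_or_ge (a + 1) h with hc | hc
    · rw [Nat.mod_eq_of_lt hc]; exact hedge a hah
    · have hah' : a + 1 = h := by omega
      rw [hah', Nat.mod_self, hclose, ← hah']
      exact hedge a hah
  · simp only [Nat.add_zero, Nat.add_mod_right]
  · intro a ha b hb heq
    simp only at heq
    have h1 : (j + a) % h = (j + b) % h :=
      hinj _ (Nat.mod_lt _ (by omega)) _ (Nat.mod_lt _ (by omega)) heq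
    have h2 : a % h = b % h := Nat.ModEq.add_left_cancel' j h1
    rwa [Nat.mod_eq_of_lt ha, Nat.mod_eq_of_lt hb] at h2

lemma topDownStep_subset (E : V → V → Prop) (k : ℕ) (R : Set V) (v : V) :
    topDownStep E k R v ⊆ R := by
  unfold topDownStep
  split
  · exact subset_rfl
  · exact Set.diff_subset

lemma foldl_topDownStep_subset (E : V → V → Prop) (k : ℕ) (l : List V) (R : Set V) :
    l.foldl (topDownStep E k) R ⊆ R := by
  induction l generalizing R with
  | nil => exact subset_rfl
  | cons a t ih =>
    exact (ih (topDownStep E k R a)).trans (topDownStep_subset E k R a)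

lemma topDownStep_cover {E : V → V → Prop} {k : ℕ} {R : Set V} (v : V)
    (hcov : HopCycleCover E k R) : HopCycleCover E k (topDownStep E k R v) := by
  unfold topDownStep
  split
  · exact hcov
  · rename_i hcond
    intro h w h3 hhk hw
    by_contra hno
    push_neg at hno
    have hall : ∀ i ≤ h, w i ∉ R \ {v} := fun i hi => hno i hi
    obtain ⟨i, hi, hiR⟩ := hcov h w h3 hhk hw
    have hiv : w i = v := by
      have := hall i hi
      simp only [Set.mem_diff, Set.mem_singleton_iff, not_and, not_not] at this
      exact this hiR
    -- get j < h with w j = v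
    obtain ⟨j, hj, hjv⟩ : ∃ j < h, w j = v := by
      rcases Nat.lt_or_ge i h with hc | hc
      · exact ⟨i, hc, hiv⟩
      · have : i = h := by omega
        exact ⟨0, by omega, by rw [hw.1.2, ← this, hiv]⟩
    apply hcond
    refine ⟨h, fun i => w ((j + i) % h), h3, hhk, rotate_simple_cycle h3 hw j hj, ?_, ?_⟩
    · simp only [Nat.add_zero, Nat.mod_eq_of_lt hj, hjv]
    · intro i _
      exact hall _ (le_of_lt (Nat.mod_lt _ (by omega)))

lemma foldl_topDownStep_cover {E : V → V → Prop} {k : ℕ} (l : List V) {R : Set V}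
    (hcov : HopCycleCover E k R) :
    HopCycleCover E k (l.foldl (topDownStep E k) R) := by
  induction l generalizing R with
  | nil => exact hcov
  | cons a t ih => exact ih (topDownStep_cover a hcov)

lemma foldl_topDownStep_kept {E : V → V → Prop} {k : ℕ} (l : List V) {R : Set V} {v : V}
    (hv : v ∈ l) (hvR : v ∈ l.foldl (topDownStep E k) R) :
    ∃ S : Set V, l.foldl (topDownStep E k) R ⊆ S ∧ HasHopCycleThrough E k (S \ {v}) v := by
  induction l generalizing R with
  | nil => simp at hv
  | cons a t ih =>
    simp only [List.foldl_cons] at hvR ⊢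
    by_cases hvt : v ∈ t
    · exact ih hvt hvR
    · have hva : v = a := by
        rcases List.mem_cons.mp hv with h | h
        · exact h
        · exact absurd h hvt
      subst hva
      have hmem : v ∈ topDownStep E k R v :=
        foldl_topDownStep_subset E k t (topDownStep E k R v) hvR
      have hcond : HasHopCycleThrough E k (R \ {v}) v := by
        by_contra hc
        rw [topDownStep, if_neg hc] at hmem
        exact hmem.2 rfl
      exact ⟨R, (foldl_topDownStep_subset E k t _).trans (topDownStep_subset E k R v), hcond⟩

/-- The top-down algorithm, starting from R = V(G) and processing every
vertex once, returns a feasible and minimal hop-constrained cycle cover. -/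
theorem stmt12 (E : V → V → Prop) (k : ℕ) (hk : 3 ≤ k) (l : List V)
    (hl : ∀ v : V, v ∈ l) :
    HopCycleCover E k (l.foldl (topDownStep E k) Set.univ) ∧
    ∀ v ∈ l.foldl (topDownStep E k) Set.univ,
      ¬ HopCycleCover E k (l.foldl (topDownStep E k) Set.univ \ {v}) := by
  constructor
  · exact foldl_topDownStep_cover l (fun h w _ _ _ => ⟨0, by omega, Set.mem_univ _⟩)
  · intro v hv hcov
    obtain ⟨S, hSsub, h', w, h3, hhk, hw, _, hwS⟩ := foldl_topDownStep_kept l (hl v) hv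
    obtain ⟨i, hi, hiC⟩ := hcov h' w h3 hhk hw
    exact hwS i hi ⟨hSsub hiC.1, hiC.2⟩
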